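/- arXiv:1601.02977 — 2 statements merged into one kernel-verified Lean document; each statement's English description precedes it below -/
import Mathlib

section
/- Let D = ℝ·(1, ..., 1) ⊆ ℝ^n (n ≥ 1) with quotient map q : ℝ^n → ℝ^n / D. Then the map h : ℝ_{≥0}^n → (ℝ^n / D) × ℝ_{≥0} defined by h(r) = ( q(−r), r_1 r_2 ⋯ r_n ) is a homeomorphism. -/
open scoped BigOperators

/-- The diagonal line D = ℝ·(1,…,1) ⊆ ℝ^n. -/
noncomputable def diagLine (n : ℕ) : Submodule ℝ (Fin n → ℝ) :=
  Submodule.span ℝ {fun _ => (1 : ℝ)}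

namespace Stmt5Aux

variable {n : ℕ}

lemma prod_le {z : Fin n → ℝ} {t t' : ℝ} (hz : ∀ a, 0 ≤ z a + t) (h : t ≤ t') :
    ∏ a, (z a + t) ≤ ∏ a, (z a + t') :=
  Finset.prod_le_prod (fun a _ => hz a) (fun a _ => by linarith)

lemma prod_lt [Nonempty (Fin n)] {z : Fin n → ℝ} {t t' : ℝ}
    (hz : ∀ a, 0 ≤ z a + t) (h : t < t') :
    ∏ a, (z a + t) < ∏ a, (z a + t') := by
  by_cases hzero : ∃ a, z a + t = 0
  · obtain ⟨a, ha⟩ := hzero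
    rw [Finset.prod_eq_zero (Finset.mem_univ a) ha]
    exact Finset.prod_pos fun b _ => by have := hz b; linarith
  · push_neg at hzero
    exact Finset.prod_lt_prod_of_nonempty
      (fun a _ => lt_of_le_of_ne (hz a) (Ne.symm (hzero a)))
      (fun a _ => by linarith) Finset.univ_nonempty

lemma troot_exists (hn : 0 < n) {z : Fin n → ℝ} {p : ℝ} (hp : 0 ≤ p) :
    ∃ t, (∀ a, 0 ≤ z a + t) ∧ ∏ a, (z a + t) = p := by
  haveI : Nonempty (Fin n) := ⟨⟨0, hn⟩⟩
  set t₁ := Finset.univ.sup' Finset.univ_nonempty (fun a => -z a) with ht₁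
  have h1 : ∀ a, 0 ≤ z a + t₁ := fun a => by
    have := Finset.le_sup' (f := fun a => -z a) (Finset.mem_univ a); linarith
  obtain ⟨a₀, -, ha₀⟩ := Finset.exists_mem_eq_sup' Finset.univ_nonempty (fun a => -z a)
  have hg1 : ∏ a, (z a + t₁) = 0 :=
    Finset.prod_eq_zero (Finset.mem_univ a₀) (by rw [← ht₁] at ha₀; rw [ha₀]; ring)
  have hcont : ContinuousOn (fun t => ∏ a, (z a + t)) (Set.Icc t₁ (t₁ + p + 1)) :=
    (continuous_finset_prod _ fun a _ => (continuous_const.add continuous_id)).continuousOn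
  have hub : p ≤ ∏ a, (z a + (t₁ + p + 1)) := by
    calc p ≤ p + 1 := by linarith
      _ ≤ (p + 1) ^ n := le_self_pow₀ (by linarith) hn.ne'
      _ = ∏ _a : Fin n, (p + 1) := by
          rw [Finset.prod_const, Finset.card_univ, Fintype.card_fin]
      _ ≤ ∏ a, (z a + (t₁ + p + 1)) :=
          Finset.prod_le_prod (fun _ _ => by linarith)
            (fun a _ => by have := h1 a; linarith)
  have hiv := intermediate_value_Icc (by linarith : t₁ ≤ t₁ + p + 1) hcont
  have hmem : p ∈ Set.Icc ((fun t => ∏ a, (z a + t)) t₁)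
      ((fun t => ∏ a, (z a + t)) (t₁ + p + 1)) := by
    constructor
    · show (∏ a, (z a + t₁)) ≤ p
      rw [hg1]; exact hp
    · exact hub
  obtain ⟨t, ht, htp⟩ := hiv hmem
  exact ⟨t, fun a => by have := h1 a; have := ht.1; linarith, htp⟩

lemma troot_unique (hn : 0 < n) {z : Fin n → ℝ} {t t' p : ℝ}
    (h : (∀ a, 0 ≤ z a + t) ∧ ∏ a, (z a + t) = p)
    (h' : (∀ a, 0 ≤ z a + t') ∧ ∏ a, (z a + t') = p) : t = t' := by
  haveI : Nonempty (Fin n) := ⟨⟨0, hn⟩⟩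
  rcases lt_trichotomy t t' with hlt | he | hlt
  · have := prod_lt h.1 hlt; rw [h.2, h'.2] at this; linarith
  · exact he
  · have := prod_lt h'.1 hlt; rw [h.2, h'.2] at this; linarith

open scoped Classical in
noncomputable def troot (z : Fin n → ℝ) (p : ℝ) : ℝ :=
  if h : ∃ t, (∀ a, 0 ≤ z a + t) ∧ ∏ a, (z a + t) = p then h.choose else 0

lemma troot_spec (hn : 0 < n) {z : Fin n → ℝ} {p : ℝ} (hp : 0 ≤ p) :
    (∀ a, 0 ≤ z a + troot z p) ∧ ∏ a, (z a + troot z p) = p := by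
  have hex := troot_exists hn (z := z) hp
  classical
  rw [troot, dif_pos hex]
  exact hex.choose_spec

lemma troot_cont (hn : 0 < n) :
    Continuous (fun zp : (Fin n → ℝ) × {p : ℝ // 0 ≤ p} => troot zp.1 (zp.2 : ℝ)) := by
  haveI : Nonempty (Fin n) := ⟨⟨0, hn⟩⟩
  rw [continuous_iff_continuousAt]
  rintro ⟨z₀, p₀⟩
  have hspec := troot_spec hn (z := z₀) p₀.2
  set t₀ := troot z₀ (p₀ : ℝ) with ht₀
  have hprodc : ∀ c : ℝ, Continuous
      (fun zp : (Fin n → ℝ) × {p : ℝ // 0 ≤ p} => ∏ a, (zp.1 a + c)) := fun c =>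
    continuous_finset_prod _ fun a _ =>
      ((continuous_apply a).comp continuous_fst).add continuous_const
  have hsnd : Continuous (fun zp : (Fin n → ℝ) × {p : ℝ // 0 ≤ p} => (zp.2 : ℝ)) :=
    continuous_subtype_val.comp continuous_snd
  apply tendsto_order.2
  constructor
  · intro c hc
    by_cases hcz : ∀ a, 0 ≤ z₀ a + c
    · have hlt : ∏ a, (z₀ a + c) < (p₀ : ℝ) := by
        have := prod_lt hcz hc; rw [hspec.2] at this; exact this
      have hev : ∀ᶠ zp : (Fin n → ℝ) × {p : ℝ // 0 ≤ p} in nhds (z₀, p₀),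
          (∏ a, (zp.1 a + c)) < (zp.2 : ℝ) :=
        ContinuousAt.eventually_lt (hprodc c).continuousAt hsnd.continuousAt hlt
      filter_upwards [hev] with zp hzp
      by_contra hle
      push_neg at hle
      have hs := troot_spec hn (z := zp.1) zp.2.2
      have := prod_le hs.1 hle
      rw [hs.2] at this; linarith
    · push_neg at hcz
      obtain ⟨a, ha⟩ := hcz
      have hev : ∀ᶠ zp : (Fin n → ℝ) × {p : ℝ // 0 ≤ p} in nhds (z₀, p₀),
          zp.1 a + c < 0 :=
        ContinuousAt.eventually_lt
          (((continuous_apply a).comp continuous_fst).add continuous_const).continuousAt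
          continuousAt_const (by linarith)
      filter_upwards [hev] with zp hzp
      have hs := troot_spec hn (z := zp.1) zp.2.2
      have := hs.1 a; linarith
  · intro c hc
    have hcz : ∀ a, 0 < z₀ a + c := fun a => by have := hspec.1 a; linarith
    have hlt : (p₀ : ℝ) < ∏ a, (z₀ a + c) := by
      have := prod_lt hspec.1 hc; rw [hspec.2] at this; exact this
    have hev1 : ∀ᶠ zp : (Fin n → ℝ) × {p : ℝ // 0 ≤ p} in nhds (z₀, p₀),
        (zp.2 : ℝ) < ∏ a, (zp.1 a + c) :=
      ContinuousAt.eventually_lt hsnd.continuousAt (hprodc c).continuousAt hlt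
    have hev2 : ∀ᶠ zp : (Fin n → ℝ) × {p : ℝ // 0 ≤ p} in nhds (z₀, p₀),
        ∀ a, 0 < zp.1 a + c := by
      rw [Filter.eventually_all]
      intro a
      exact ContinuousAt.eventually_lt continuousAt_const
        (((continuous_apply a).comp continuous_fst).add continuous_const).continuousAt
        (hcz a)
    filter_upwards [hev1, hev2] with zp h1 h2
    by_contra hle
    push_neg at hle
    have hs := troot_spec hn (z := zp.1) zp.2.2
    have : ∏ a, (zp.1 a + c) ≤ ∏ a, (zp.1 a + troot zp.1 (zp.2 : ℝ)) :=
      prod_le (fun a => (h2 a).le) hle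
    rw [hs.2] at this; linarith

/-- The "remove the mean" map. -/
noncomputable def piFun (n : ℕ) (x : Fin n → ℝ) : Fin n → ℝ :=
  fun a => x a - (∑ b, x b) / n

lemma piFun_resp (n : ℕ) : ∀ x y : Fin n → ℝ,
    (Submodule.quotientRel (diagLine n)).r x y → piFun n x = piFun n y := by
  intro x y hxy
  have hmem : x - y ∈ diagLine n := (Submodule.quotientRel_def _).1 hxy
  obtain ⟨cst, hc⟩ := Submodule.mem_span_singleton.1 hmem
  funext a
  have hnn : (0 : ℝ) < n := by exact_mod_cast a.pos
  have hxy' : ∀ b, x b = y b + cst := by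
    intro b
    have := congrFun hc b
    simp only [Pi.smul_apply, Pi.sub_apply, smul_eq_mul, mul_one] at this
    linarith
  have hsum : ∑ b, x b = (∑ b, y b) + n * cst := by
    calc ∑ b, x b = ∑ b, (y b + cst) := by
          exact Finset.sum_congr rfl fun b _ => hxy' b
      _ = (∑ b, y b) + n * cst := by
          rw [Finset.sum_add_distrib, Finset.sum_const, Finset.card_univ,
            Fintype.card_fin, nsmul_eq_mul]
  have h0 : (n : ℝ) ≠ 0 := ne_of_gt hnn
  simp only [piFun]
  rw [hxy' a, hsum, add_div, mul_div_cancel_left₀ _ h0]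
  ring

noncomputable def sec (n : ℕ) : ((Fin n → ℝ) ⧸ diagLine n) → (Fin n → ℝ) :=
  Quotient.lift (piFun n) (piFun_resp n)

lemma sec_mk (n : ℕ) (x : Fin n → ℝ) :
    sec n (Submodule.Quotient.mk x) = piFun n x := rfl

lemma mk_sec (n : ℕ) (u : (Fin n → ℝ) ⧸ diagLine n) :
    Submodule.Quotient.mk (sec n u) = u := by
  obtain ⟨x, rfl⟩ := Submodule.Quotient.mk_surjective _ u
  rw [sec_mk, Submodule.Quotient.eq]
  refine Submodule.mem_span_singleton.2 ⟨-(∑ b, x b) / n, ?_⟩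
  funext a
  simp only [Pi.smul_apply, Pi.sub_apply, smul_eq_mul, mul_one, piFun]
  ring

lemma sec_cont (n : ℕ) : Continuous (sec n) := by
  apply Continuous.quotient_lift
  exact continuous_pi fun a => (continuous_apply a).sub
    (Continuous.div_const (continuous_finset_sum _ fun b _ => continuous_apply b) (n : ℝ))

end Stmt5Aux

open Stmt5Aux in
/-- h(r) = ([−r], r₁⋯r_n) is a homeomorphism from the non-negative orthant ℝ_{≥0}^n
onto (ℝ^n/D) × ℝ_{≥0}. -/
theorem stmt_5 (n : ℕ) (hn : 0 < n) :
    ∃ e : {r : Fin n → ℝ // ∀ a, 0 ≤ r a} ≃ₜ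
        ((Fin n → ℝ) ⧸ diagLine n) × {p : ℝ // 0 ≤ p},
      ∀ r : {r : Fin n → ℝ // ∀ a, 0 ≤ r a},
        e r = (Submodule.Quotient.mk (-(r : Fin n → ℝ)),
          ⟨∏ a, (r : Fin n → ℝ) a, Finset.prod_nonneg fun a _ => r.2 a⟩) := by
  haveI : Nonempty (Fin n) := ⟨⟨0, hn⟩⟩
  set f : {r : Fin n → ℝ // ∀ a, 0 ≤ r a} →
      ((Fin n → ℝ) ⧸ diagLine n) × {p : ℝ // 0 ≤ p} :=
    fun r => (Submodule.Quotient.mk (-(r : Fin n → ℝ)),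
      ⟨∏ a, (r : Fin n → ℝ) a, Finset.prod_nonneg fun a _ => r.2 a⟩) with hf
  set g : ((Fin n → ℝ) ⧸ diagLine n) × {p : ℝ // 0 ≤ p} →
      {r : Fin n → ℝ // ∀ a, 0 ≤ r a} :=
    fun up => ⟨fun a => (-(sec n up.1)) a + troot (-(sec n up.1)) (up.2 : ℝ),
      fun a => (troot_spec hn up.2.2).1 a⟩ with hg
  have hli : Function.LeftInverse g f := by
    intro r
    set m : ℝ := (∑ b, (r : Fin n → ℝ) b) / n with hm
    have hz : ∀ a, (-(sec n (Submodule.Quotient.mk (-(r : Fin n → ℝ))))) a + m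
        = (r : Fin n → ℝ) a := by
      intro a
      have : sec n (Submodule.Quotient.mk (-(r : Fin n → ℝ)))
          = piFun n (-(r : Fin n → ℝ)) := sec_mk n _
      rw [this]
      simp only [Pi.neg_apply, piFun, Pi.neg_apply]
      rw [Finset.sum_neg_distrib, hm]
      ring
    have hEq : troot (-(sec n (Submodule.Quotient.mk (-(r : Fin n → ℝ)))))
        (∏ a, (r : Fin n → ℝ) a) = m := by
      apply troot_unique hn
        (troot_spec hn (Finset.prod_nonneg fun a _ => r.2 a))
      constructor
      · intro a; rw [hz a]; exact r.2 a
      · exact Finset.prod_congr rfl fun a _ => by rw [hz a]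
    apply Subtype.ext
    funext a
    show (-(sec n (Submodule.Quotient.mk (-(r : Fin n → ℝ))))) a
        + troot (-(sec n (Submodule.Quotient.mk (-(r : Fin n → ℝ)))))
          (∏ a, (r : Fin n → ℝ) a) = (r : Fin n → ℝ) a
    rw [hEq, hz a]
  have hri : Function.RightInverse g f := by
    rintro ⟨u, p⟩
    have hspec := troot_spec hn (z := -(sec n u)) p.2
    apply Prod.ext
    · show Submodule.Quotient.mk
        (-(fun a => (-(sec n u)) a + troot (-(sec n u)) (p : ℝ))) = u
      have hmem : (-(fun a => (-(sec n u)) a + troot (-(sec n u)) (p : ℝ)))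
          - sec n u ∈ diagLine n := by
        refine Submodule.mem_span_singleton.2 ⟨-(troot (-(sec n u)) (p : ℝ)), ?_⟩
        funext a
        simp only [Pi.smul_apply, Pi.sub_apply, Pi.neg_apply, smul_eq_mul, mul_one]
        ring
      rw [(Submodule.Quotient.eq _).2 hmem, mk_sec]
    · apply Subtype.ext
      show (∏ a, ((-(sec n u)) a + troot (-(sec n u)) (p : ℝ))) = (p : ℝ)
      exact hspec.2
  have hfc : Continuous f := by
    apply Continuous.prodMk
    · exact continuous_quotient_mk'.comp continuous_subtype_val.neg
    · exact Continuous.subtype_mk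
        (continuous_finset_prod _ fun a _ =>
          (continuous_apply a).comp continuous_subtype_val) _
  have hgc : Continuous g := by
    have hzc : Continuous (fun up : ((Fin n → ℝ) ⧸ diagLine n) × {p : ℝ // 0 ≤ p} =>
        -(sec n up.1)) := ((sec_cont n).comp continuous_fst).neg
    apply Continuous.subtype_mk
    exact continuous_pi fun a =>
      ((continuous_apply a).comp hzc).add
        ((troot_cont hn).comp (hzc.prodMk continuous_snd))
  exact ⟨Homeomorph.mk ⟨f, g, hli, hri⟩ hfc hgc, fun r => rfl⟩
end

section
/- Let 𝒟 be a pretriangulated (stable) category, and let J_−^* : 𝒟 → 𝒟°_− and J_+^* : 𝒟 → 𝒟°_+ be exact functors admitting fully faithful left adjoints J_{−!}, J_{+!} and fully faithful right adjoints J_{−*}, J_{+*}. Let 𝒟_− = ker(J_+^*) and 𝒟_+ = ker(J_−^*), with inclusion functors I_{−!}, I_{+!} admitting right adjoints I_−^!, I_+^!. Assume: (a) the compositions J_+^* J_{−*} and J_−^* J_{+*} are equivalences (axiom SP1); and (b) the compositions J_−^* I_{−!} and J_+^* I_{+!} are conservative. Then the compositions I_+^! I_{−!} : 𝒟_− → 𝒟_+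 and I_−^! I_{+!} : 𝒟_+ → 𝒟_− are equivalences (axiom SP2); i.e. the diagram 𝒟°_− ← 𝒟 → 𝒟°_+ is a spherical pair. -/
open CategoryTheory Limits

open Pretriangulated ZeroObject

section AuxSP

theorem aux_isIso_of_isZero {C : Type*} [Category C] {X Y : C} (hX : IsZero X) (hY : IsZero Y)
    (f : X ⟶ Y) : IsIso f :=
  ⟨hY.to_ X, hX.eq_of_src _ _, hY.eq_of_src _ _⟩

variable {D Dm Dp : Type*} [Category D] [Category Dm] [Category Dp]
    [HasZeroObject D] [HasZeroObject Dm] [HasZeroObject Dp]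
    [Preadditive D] [Preadditive Dm] [Preadditive Dp]
    [HasShift D ℤ] [HasShift Dm ℤ] [HasShift Dp ℤ]
    [∀ n : ℤ, (shiftFunctor D n).Additive]
    [∀ n : ℤ, (shiftFunctor Dm n).Additive]
    [∀ n : ℤ, (shiftFunctor Dp n).Additive]
    [Pretriangulated D] [Pretriangulated Dm] [Pretriangulated Dp]

/-- morphisms into a shifted target vanish if the corresponding unshifted morphisms vanish. -/
theorem aux_shiftZero (a b : ℤ) (hab : a + b = 0) {X Y : D}
    (hz : ∀ g : (X⟦a⟧ : D) ⟶ Y, g = 0) (f : X ⟶ (Y⟦b⟧ : D)) : f = 0 := by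
  have adjS := (shiftEquiv' D a b hab).toAdjunction
  have h1 : f = (adjS.homEquiv X Y) ((adjS.homEquiv X Y).symm f) :=
    (Equiv.apply_symm_apply _ _).symm
  rw [hz ((adjS.homEquiv X Y).symm f)] at h1
  erw [Adjunction.homEquiv_unit, Functor.map_zero, comp_zero] at h1
  exact h1

theorem aux_shiftZero' (a b : ℤ) (hab : a + b = 0) {X Y : D}
    (hz : ∀ g : X ⟶ (Y⟦b⟧ : D), g = 0) (f : (X⟦a⟧ : D) ⟶ Y) : f = 0 := by
  have adjS := (shiftEquiv' D a b hab).toAdjunction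
  have h1 : f = (adjS.homEquiv X Y).symm ((adjS.homEquiv X Y) f) :=
    (Equiv.symm_apply_apply _ _).symm
  rw [hz ((adjS.homEquiv X Y) f)] at h1
  erw [Adjunction.homEquiv_counit, Functor.map_zero, zero_comp] at h1
  exact h1

theorem aux_sp
    (Jm : D ⥤ Dm) (Jp : D ⥤ Dp)
    [Jm.CommShift ℤ] [Jp.CommShift ℤ]
    [Jm.IsTriangulated] [Jp.IsTriangulated]
    (Jmr : Dm ⥤ D) (Jpl : Dp ⥤ D)
    [Jmr.Full] [Jmr.Faithful] [Jpl.Full] [Jpl.Faithful]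
    (adjmr : Jm ⊣ Jmr) (adjpl : Jpl ⊣ Jp)
    (Ip : D ⥤ ObjectProperty.FullSubcategory (fun X : D => IsZero (Jm.obj X)))
    (adjIp : ObjectProperty.ι (fun X : D => IsZero (Jm.obj X)) ⊣ Ip)
    [(Jmr ⋙ Jp).IsEquivalence]
    [(ObjectProperty.ι (fun X : D => IsZero (Jp.obj X)) ⋙ Jm).ReflectsIsomorphisms]
    [(ObjectProperty.ι (fun X : D => IsZero (Jm.obj X)) ⋙ Jp).ReflectsIsomorphisms] :
    (ObjectProperty.ι (fun X : D => IsZero (Jp.obj X)) ⋙ Ip).IsEquivalence := by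
  haveI : (Jpl ⋙ Jm).IsEquivalence :=
    (adjpl.comp adjmr).isEquivalence_left_of_isEquivalence_right
  -- shift-stability of the kernels
  have hshiftm : ∀ {N : D}, IsZero (Jm.obj N) → ∀ n : ℤ, IsZero (Jm.obj ((N⟦n⟧ : D))) := by
    intro N hN n
    exact ((shiftFunctor Dm n).map_isZero hN).of_iso ((Jm.commShiftIso n).app N)
  have hshiftp : ∀ {N : D}, IsZero (Jp.obj N) → ∀ n : ℤ, IsZero (Jp.obj ((N⟦n⟧ : D))) := by
    intro N hN n
    exact ((shiftFunctor Dp n).map_isZero hN).of_iso ((Jp.commShiftIso n).app N)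
  -- orthogonality: no maps from ker Jm into the image of Jmr
  have orthJmr : ∀ {N : D}, IsZero (Jm.obj N) → ∀ {B : Dm} (f : N ⟶ Jmr.obj B), f = 0 := by
    intro N hN B f
    have h1 : f = (adjmr.homEquiv N B) ((adjmr.homEquiv N B).symm f) :=
      (Equiv.apply_symm_apply _ _).symm
    rw [hN.eq_of_src ((adjmr.homEquiv N B).symm f) 0] at h1
    rw [Adjunction.homEquiv_unit, Functor.map_zero, comp_zero] at h1
    exact h1
  -- conservativity promotion for the unit of adjmr
  have L1 : ∀ S : D, IsIso (Jp.map (adjmr.unit.app S)) → IsIso (adjmr.unit.app S) := by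
    intro S hS
    obtain ⟨W, e1, w1, hB⟩ := distinguished_cocone_triangle₁ (adjmr.unit.app S)
    haveI h1 : IsIso (Jm.map (adjmr.unit.app S)) := by
      haveI h0 : IsIso (Jm.map (adjmr.unit.app S) ≫ adjmr.counit.app (Jm.obj S)) := by
        rw [adjmr.left_triangle_components S]; exact IsIso.id _
      exact IsIso.of_isIso_comp_right _ (adjmr.counit.app (Jm.obj S))
    haveI := hS
    have hWm : IsZero (Jm.obj W) :=
      Triangle.isZero₁_of_isIso₂ _ (Jm.map_distinguished _ hB) (by change IsIso (Jm.map (adjmr.unit.app S)); infer_instance)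
    have hWp : IsZero (Jp.obj W) :=
      Triangle.isZero₁_of_isIso₂ _ (Jp.map_distinguished _ hB) (by change IsIso (Jp.map (adjmr.unit.app S)); infer_instance)
    have hz0m : IsZero (Jm.obj (0 : D)) := Jm.map_isZero (isZero_zero D)
    let c₁ : ObjectProperty.FullSubcategory (fun X : D => IsZero (Jm.obj X)) := ⟨W, hWm⟩
    let c₂ : ObjectProperty.FullSubcategory (fun X : D => IsZero (Jm.obj X)) := ⟨(0 : D), hz0m⟩
    let f : c₁ ⟶ c₂ := ObjectProperty.homMk (0 : W ⟶ (0 : D))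
    haveI : IsIso ((ObjectProperty.ι (fun X : D => IsZero (Jm.obj X)) ⋙ Jp).map f) :=
      by exact aux_isIso_of_isZero hWp (Jp.map_isZero (isZero_zero D)) _
    haveI : IsIso f :=
      isIso_of_reflects_iso f (ObjectProperty.ι (fun X : D => IsZero (Jm.obj X)) ⋙ Jp)
    have hW : IsZero W := (isZero_zero D).of_iso
      ((ObjectProperty.ι (fun X : D => IsZero (Jm.obj X))).mapIso (asIso f))
    exact (Triangle.isZero₁_iff_isIso₂ _ hB).mp hW
  -- the unit of adjmr is invertible on the image of Jpl
  have L2 : ∀ A : Dp, IsIso (adjmr.unit.app (Jpl.obj A)) := by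
    intro A
    apply L1
    haveI h0 : IsIso ((adjpl.comp adjmr).unit.app A) := inferInstance
    rw [Adjunction.comp_unit_app] at h0
    exact IsIso.of_isIso_comp_left (adjpl.unit.app A) _
  -- orthogonality: no maps from ker Jm into the image of Jpl
  have orthJpl : ∀ {N : D}, IsZero (Jm.obj N) → ∀ {A : Dp} (f : N ⟶ Jpl.obj A), f = 0 := by
    intro N hN A f
    haveI := L2 A
    have h1 : f = (f ≫ adjmr.unit.app (Jpl.obj A)) ≫ inv (adjmr.unit.app (Jpl.obj A)) := by
      simp
    rw [orthJmr hN (f ≫ adjmr.unit.app (Jpl.obj A)), zero_comp] at h1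
    exact h1
  -- (O2): no maps from the image of Jmr into ker Jp
  have O2 : ∀ (B : Dm) {X' : D}, IsZero (Jp.obj X') → ∀ f : Jmr.obj B ⟶ X', f = 0 := by
    intro B X' hX' f
    haveI hJmcu : IsIso (Jm.map (adjpl.counit.app (Jmr.obj B))) := by
      haveI h0 : IsIso ((adjpl.comp adjmr).counit.app B) := inferInstance
      rw [Adjunction.comp_counit_app] at h0
      exact IsIso.of_isIso_comp_right _ (adjmr.counit.app B)
    haveI hcu : IsIso (adjpl.counit.app (Jmr.obj B)) := by
      obtain ⟨C0, p0, d0, hA⟩ := distinguished_cocone_triangle (adjpl.counit.app (Jmr.obj B))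
      haveI : IsIso (Jp.map (adjpl.counit.app (Jmr.obj B))) := by
        haveI h0 : IsIso (adjpl.unit.app (Jp.obj (Jmr.obj B)) ≫
            Jp.map (adjpl.counit.app (Jmr.obj B))) := by
          rw [adjpl.right_triangle_components (Jmr.obj B)]; exact IsIso.id _
        exact IsIso.of_isIso_comp_left (adjpl.unit.app (Jp.obj (Jmr.obj B))) _
      have hC0p : IsZero (Jp.obj C0) :=
        Triangle.isZero₃_of_isIso₁ _ (Jp.map_distinguished _ hA) (by change IsIso (Jp.map (adjpl.counit.app (Jmr.obj B))); infer_instance)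
      have hC0m : IsZero (Jm.obj C0) :=
        Triangle.isZero₃_of_isIso₁ _ (Jm.map_distinguished _ hA) (by change IsIso (Jm.map (adjpl.counit.app (Jmr.obj B))); infer_instance)
      have hz0p : IsZero (Jp.obj (0 : D)) := Jp.map_isZero (isZero_zero D)
      let c₁ : ObjectProperty.FullSubcategory (fun X : D => IsZero (Jp.obj X)) := ⟨C0, hC0p⟩
      let c₂ : ObjectProperty.FullSubcategory (fun X : D => IsZero (Jp.obj X)) := ⟨(0 : D), hz0p⟩
      let f0 : c₁ ⟶ c₂ := ObjectProperty.homMk (0 : C0 ⟶ (0 : D))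
      haveI : IsIso ((ObjectProperty.ι (fun X : D => IsZero (Jp.obj X)) ⋙ Jm).map f0) :=
        by exact aux_isIso_of_isZero hC0m (Jm.map_isZero (isZero_zero D)) _
      haveI : IsIso f0 :=
        isIso_of_reflects_iso f0 (ObjectProperty.ι (fun X : D => IsZero (Jp.obj X)) ⋙ Jm)
      have hC0 : IsZero C0 := (isZero_zero D).of_iso
        ((ObjectProperty.ι (fun X : D => IsZero (Jp.obj X))).mapIso (asIso f0))
      exact (Triangle.isZero₃_iff_isIso₁ _ hA).mp hC0
    have h4 : adjpl.counit.app (Jmr.obj B) ≫ f = adjpl.counit.app (Jmr.obj B) ≫ 0 := by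
      apply (adjpl.homEquiv (Jp.obj (Jmr.obj B)) X').injective
      exact hX'.eq_of_tgt _ _
    exact (cancel_epi (adjpl.counit.app (Jmr.obj B))).mp h4
  -- shifted orthogonality relations
  have orthJmrShift : ∀ {N : D}, IsZero (Jm.obj N) →
      ∀ {B : Dm} (f : N ⟶ (((Jmr.obj B)⟦(-1 : ℤ)⟧ : D))), f = 0 := by
    intro N hN B f
    exact aux_shiftZero 1 (-1) (by ring) (fun g => orthJmr (hshiftm hN 1) g) f
  have orthJplShift : ∀ {N : D}, IsZero (Jm.obj N) →
      ∀ {A : Dp} (f : N ⟶ (((Jpl.obj A)⟦(1 : ℤ)⟧ : D))), f = 0 := by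
    intro N hN A f
    exact aux_shiftZero (-1) 1 (by ring) (fun g => orthJpl (hshiftm hN (-1)) g) f
  have O2Shift : ∀ (B : Dm) {X' : D}, IsZero (Jp.obj X') →
      ∀ f : (((Jmr.obj B)⟦(-1 : ℤ)⟧ : D)) ⟶ X', f = 0 := by
    intro B X' hX' f
    exact aux_shiftZero' (-1) 1 (by ring) (fun g => O2 B (hshiftp hX' 1) g) f
  -- the key bijectivity: Ip.map is bijective on morphisms between objects of ker Jp
  have key : ∀ (F F' : ObjectProperty.FullSubcategory (fun X : D => IsZero (Jp.obj X))),
      Function.Bijective (fun g : F.obj ⟶ F'.obj => Ip.map g) := by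
    intro F F'
    obtain ⟨W', e'0, w', hB0⟩ := distinguished_cocone_triangle₁ (adjmr.unit.app F.obj)
    let e' : W' ⟶ F.obj := e'0
    have hB : Triangle.mk e' (adjmr.unit.app F.obj) w' ∈ distTriang D := hB0
    haveI h1 : IsIso (Jm.map (adjmr.unit.app F.obj)) := by
      haveI h0 : IsIso (Jm.map (adjmr.unit.app F.obj) ≫ adjmr.counit.app (Jm.obj F.obj)) := by
        rw [adjmr.left_triangle_components F.obj]; exact IsIso.id _
      exact IsIso.of_isIso_comp_right _ (adjmr.counit.app (Jm.obj F.obj))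
    have hWm : IsZero (Jm.obj W') :=
      Triangle.isZero₁_of_isIso₂ _ (Jm.map_distinguished _ hB) (by change IsIso (Jm.map (adjmr.unit.app F.obj)); infer_instance)
    -- bijectivity of precomposition with e'
    have bij1 : Function.Bijective (fun g : F.obj ⟶ F'.obj => e' ≫ g) := by
      constructor
      · intro g₁ g₂ h12
        replace h12 : e' ≫ g₁ = e' ≫ g₂ := h12
        have h0 : e' ≫ (g₁ - g₂) = 0 := by
          rw [Preadditive.comp_sub, h12, sub_self]
        obtain ⟨h, hh⟩ := Triangle.yoneda_exact₂ _ hB (g₁ - g₂) h0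
        rw [O2 (Jm.obj F.obj) F'.property h] at hh
        exact sub_eq_zero.mp (hh.trans comp_zero)
      · intro k
        obtain ⟨g, hg⟩ := Triangle.yoneda_exact₂ _ (inv_rot_of_distTriang _ hB) k
          (O2Shift (Jm.obj F.obj) F'.property _)
        exact ⟨g, hg.symm⟩
    -- the comparison map t : ⟨W'⟩ ⟶ Ip.obj F.obj is an isomorphism
    set t : (⟨W', hWm⟩ : ObjectProperty.FullSubcategory (fun X : D => IsZero (Jm.obj X))) ⟶ Ip.obj F.obj :=
      (adjIp.homEquiv ⟨W', hWm⟩ F.obj) e' with ht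
    haveI : IsIso t := by
      apply isIso_of_yoneda_map_bijective
      intro A
      have hbij : Function.Bijective (fun x :
          (ObjectProperty.ι (fun X : D => IsZero (Jm.obj X))).obj A ⟶ W' => x ≫ e') := by
        constructor
        · intro x₁ x₂ hx
          replace hx : x₁ ≫ e' = x₂ ≫ e' := hx
          have h0 : (x₁ - x₂) ≫ e' = 0 := by rw [Preadditive.sub_comp, hx, sub_self]
          obtain ⟨h, hh⟩ := Triangle.coyoneda_exact₂ _ (inv_rot_of_distTriang _ hB) (x₁ - x₂) h0
          rw [orthJmrShift A.property h] at hh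
          exact sub_eq_zero.mp (hh.trans zero_comp)
        · intro k
          obtain ⟨g, hg⟩ := Triangle.coyoneda_exact₂ _ hB k (orthJmr A.property _)
          exact ⟨g, hg.symm⟩
      have he : (fun x : A ⟶ (⟨W', hWm⟩ : ObjectProperty.FullSubcategory (fun X : D => IsZero (Jm.obj X))) =>
          x ≫ t) = fun x => (adjIp.homEquiv A F.obj) (x.hom ≫ e') := by
        funext x
        rw [ht]
        rw [← adjIp.homEquiv_naturality_left x e']
        rfl
      rw [he]
      exact ((adjIp.homEquiv A F.obj).bijective.comp hbij).comp
        ((ObjectProperty.fullyFaithfulι _).map_bijective A ⟨W', hWm⟩)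
    -- conclude
    have key2 : ∀ g : F.obj ⟶ F'.obj, e' ≫ g =
        (adjIp.homEquiv ⟨W', hWm⟩ F'.obj).symm (t ≫ Ip.map g) := by
      intro g
      calc e' ≫ g = (adjIp.homEquiv ⟨W', hWm⟩ F.obj).symm t ≫ g := by
            rw [ht, Equiv.symm_apply_apply]
        _ = (adjIp.homEquiv ⟨W', hWm⟩ F'.obj).symm (t ≫ Ip.map g) :=
            (adjIp.homEquiv_naturality_right_symm t g).symm
    constructor
    · intro g₁ g₂ hg
      replace hg : Ip.map g₁ = Ip.map g₂ := hg
      apply bij1.injective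
      show e' ≫ g₁ = e' ≫ g₂
      rw [key2 g₁, key2 g₂, hg]
    · intro h
      obtain ⟨g, hg⟩ := bij1.surjective ((adjIp.homEquiv ⟨W', hWm⟩ F'.obj).symm (t ≫ h))
      replace hg : e' ≫ g = (adjIp.homEquiv ⟨W', hWm⟩ F'.obj).symm (t ≫ h) := hg
      refine ⟨g, ?_⟩
      have h7 := key2 g
      rw [hg] at h7
      have h6 : t ≫ h = t ≫ Ip.map g :=
        (adjIp.homEquiv ⟨W', hWm⟩ F'.obj).symm.injective h7
      exact ((cancel_epi t).mp h6).symm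
  -- essential surjectivity
  have hES : ∀ G : ObjectProperty.FullSubcategory (fun X : D => IsZero (Jm.obj X)),
      ∃ (F : ObjectProperty.FullSubcategory (fun X : D => IsZero (Jp.obj X))),
        Nonempty (Ip.obj F.obj ≅ G) := by
    intro G
    obtain ⟨Z, p00, d0, hA0⟩ := distinguished_cocone_triangle (adjpl.counit.app G.obj)
    let p0 : G.obj ⟶ Z := p00
    have hA : Triangle.mk (adjpl.counit.app G.obj) p0 d0 ∈ distTriang D := hA0
    have hZp : IsZero (Jp.obj Z) := by
      haveI : IsIso (Jp.map (adjpl.counit.app G.obj)) := by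
        haveI h0 : IsIso (adjpl.unit.app (Jp.obj G.obj) ≫ Jp.map (adjpl.counit.app G.obj)) := by
          rw [adjpl.right_triangle_components G.obj]; exact IsIso.id _
        exact IsIso.of_isIso_comp_left (adjpl.unit.app (Jp.obj G.obj)) _
      exact Triangle.isZero₃_of_isIso₁ _ (Jp.map_distinguished _ hA) (by change IsIso (Jp.map (adjpl.counit.app G.obj)); infer_instance)
    set m : G ⟶ Ip.obj Z := (adjIp.homEquiv G Z) p0 with hm
    haveI : IsIso m := by
      apply isIso_of_yoneda_map_bijective
      intro A
      have hbij : Function.Bijective (fun x :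
          (ObjectProperty.ι (fun X : D => IsZero (Jm.obj X))).obj A ⟶ G.obj =>
          x ≫ p0) := by
        constructor
        · intro x₁ x₂ hx
          replace hx : x₁ ≫ p0 = x₂ ≫ p0 := hx
          have h0 : (x₁ - x₂) ≫ p0 = 0 := by rw [Preadditive.sub_comp, hx, sub_self]
          obtain ⟨h, hh⟩ := Triangle.coyoneda_exact₂ _ hA (x₁ - x₂) h0
          rw [orthJpl A.property h] at hh
          exact sub_eq_zero.mp (hh.trans zero_comp)
        · intro k
          obtain ⟨g, hg⟩ := Triangle.coyoneda_exact₃ _ hA k (orthJplShift A.property _)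
          exact ⟨g, hg.symm⟩
      have he : (fun x : A ⟶ G => x ≫ m) = fun x => (adjIp.homEquiv A Z) (x.hom ≫ p0) := by
        funext x
        rw [hm]
        rw [← adjIp.homEquiv_naturality_left x p0]
        rfl
      rw [he]
      exact ((adjIp.homEquiv A Z).bijective.comp hbij).comp
        ((ObjectProperty.fullyFaithfulι _).map_bijective A G)
    exact ⟨⟨Z, hZp⟩, ⟨(asIso m).symm⟩⟩
  -- assemble the equivalence
  refine { faithful := ⟨?_⟩, full := ⟨?_⟩, essSurj := ⟨?_⟩ }
  · intro F F' g₁ g₂ hg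
    exact ObjectProperty.hom_ext _ ((key F F').injective hg)
  · intro F F' h
    exact ⟨ObjectProperty.homMk ((key F F').surjective h).choose,
      ((key F F').surjective h).choose_spec⟩
  · intro G
    obtain ⟨F, ⟨e⟩⟩ := hES G
    exact ⟨F, ⟨e⟩⟩

end AuxSP

/-- Conservative spherical pairs: given pretriangulated categories and exact functors
J_−^* : 𝒟 → 𝒟°_−, J_+^* : 𝒟 → 𝒟°_+ admitting fully faithful left adjoints J_{∓!} and
fully faithful right adjoints J_{∓*}, with 𝒟_− = ker J_+^*, 𝒟_+ = ker J_−^* (as full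
subcategories, with inclusions I_{∓!} admitting right adjoints I_∓^!), if
(SP1) J_+^* J_{−*} and J_−^* J_{+*} are equivalences, and J_−^* I_{−!}, J_+^* I_{+!}
are conservative, then (SP2) holds: I_+^! I_{−!} and I_−^! I_{+!} are equivalences. -/
theorem stmt_18
    {D Dm Dp : Type*} [Category D] [Category Dm] [Category Dp]
    [HasZeroObject D] [HasZeroObject Dm] [HasZeroObject Dp]
    [Preadditive D] [Preadditive Dm] [Preadditive Dp]
    [HasShift D ℤ] [HasShift Dm ℤ] [HasShift Dp ℤ]
    [∀ n : ℤ, (shiftFunctor D n).Additive]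
    [∀ n : ℤ, (shiftFunctor Dm n).Additive]
    [∀ n : ℤ, (shiftFunctor Dp n).Additive]
    [Pretriangulated D] [Pretriangulated Dm] [Pretriangulated Dp]
    (Jm : D ⥤ Dm) (Jp : D ⥤ Dp)
    [Jm.CommShift ℤ] [Jp.CommShift ℤ]
    [Jm.IsTriangulated] [Jp.IsTriangulated]
    (Jml Jmr : Dm ⥤ D) (Jpl Jpr : Dp ⥤ D)
    [Jml.Full] [Jml.Faithful] [Jmr.Full] [Jmr.Faithful]
    [Jpl.Full] [Jpl.Faithful] [Jpr.Full] [Jpr.Faithful]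
    (adjml : Jml ⊣ Jm) (adjmr : Jm ⊣ Jmr)
    (adjpl : Jpl ⊣ Jp) (adjpr : Jp ⊣ Jpr)
    -- the subcategories 𝒟_− = ker(J_+^*) and 𝒟_+ = ker(J_−^*), with inclusions
    -- I_{−!} = ObjectProperty.ι and right adjoints I_−^! = Im, I_+^! = Ip
    (Im : D ⥤ ObjectProperty.FullSubcategory (fun X : D => IsZero (Jp.obj X)))
    (Ip : D ⥤ ObjectProperty.FullSubcategory (fun X : D => IsZero (Jm.obj X)))
    (adjIm : ObjectProperty.ι (fun X : D => IsZero (Jp.obj X)) ⊣ Im)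
    (adjIp : ObjectProperty.ι (fun X : D => IsZero (Jm.obj X)) ⊣ Ip)
    -- (SP1)
    [(Jmr ⋙ Jp).IsEquivalence] [(Jpr ⋙ Jm).IsEquivalence]
    -- conservativity of J_−^* I_{−!} and J_+^* I_{+!}
    [(ObjectProperty.ι (fun X : D => IsZero (Jp.obj X)) ⋙ Jm).ReflectsIsomorphisms]
    [(ObjectProperty.ι (fun X : D => IsZero (Jm.obj X)) ⋙ Jp).ReflectsIsomorphisms] :
    -- (SP2): I_+^! I_{−!} and I_−^! I_{+!} are equivalences
    (ObjectProperty.ι (fun X : D => IsZero (Jp.obj X)) ⋙ Ip).IsEquivalence ∧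
    (ObjectProperty.ι (fun X : D => IsZero (Jm.obj X)) ⋙ Im).IsEquivalence := by
  exact ⟨aux_sp Jm Jp Jmr Jpl adjmr adjpl Ip adjIp,
    aux_sp Jp Jm Jpr Jml adjpr adjml Im adjIm⟩
end
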